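/- Let p be an odd prime, g a primitive root modulo p, d an even divisor of p-1. For integers i, j, define the cyclotomic number (i,j)_d as the number of pairs (u,v) with 0 ≤ u, v < (p-1)/d such that g^{i+du} + 1 ≡ g^{j+dv} (mod p). Then for any integer k, (d/2, k)_d = (d/2, k + d/2)_d. -/

import Mathlib

theorem stmt_5 (p : ℕ) [Fact p.Prime] (hpodd : Odd p)
    (g : ℕ) (hg : orderOf (g : ZMod p) = p - 1)
    (d : ℕ) (hd : d ∣ p - 1) (hdeven : Even d) (hd0 : 0 < d) (k : ℤ) :
    ((Finset.range ((p - 1) / d) ×ˢ Finset.range ((p - 1) / d)).filter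
        (fun uv => (g : ZMod p) ^ (((d / 2 : ℕ) : ℤ) + d * uv.1) + 1
          = (g : ZMod p) ^ (k + d * uv.2))).card
    = ((Finset.range ((p - 1) / d) ×ˢ Finset.range ((p - 1) / d)).filter
        (fun uv => (g : ZMod p) ^ (((d / 2 : ℕ) : ℤ) + d * uv.1) + 1
          = (g : ZMod p) ^ ((k + ((d / 2 : ℕ) : ℤ)) + d * uv.2))).card := by
  have hp : p.Prime := Fact.out
  have hp2 : 2 ≤ p := hp.two_le
  have hp3 : 3 ≤ p := by
    have h := Nat.odd_iff.mp hpodd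
    omega
  set n := (p - 1) / d with hn
  have hdn : d * n = p - 1 := Nat.mul_div_cancel' hd
  have hn0 : 0 < n := by
    rcases Nat.eq_zero_or_pos n with h | h
    · rw [h, Nat.mul_zero] at hdn; omega
    · exact h
  have h1 : (g : ZMod p) ^ (p - 1) = 1 := by rw [← hg]; exact pow_orderOf_eq_one _
  have hg0 : (g : ZMod p) ≠ 0 := by
    intro h
    rw [h, zero_pow (by omega : p - 1 ≠ 0)] at h1
    exact one_ne_zero h1.symm
  have hdn1 : (g : ZMod p) ^ ((d * n : ℕ) : ℤ) = 1 := by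
    rw [zpow_natCast, hdn, h1]
  have key : ∀ a t : ℤ, (g : ZMod p) ^ (a + ((d * n : ℕ) : ℤ) * t) = (g : ZMod p) ^ a := by
    intro a t
    rw [zpow_add₀ hg0, zpow_mul, hdn1, one_zpow, mul_one]
  have h2D : 2 * ((d / 2 : ℕ) : ℤ) = (d : ℤ) := by
    obtain ⟨m, hm⟩ := hdeven
    omega
  have hdnz : ((d * n : ℕ) : ℤ) = (d : ℤ) * (n : ℤ) := by push_cast; ring
  have hcong : ∀ (c : ℤ) (a : ℕ), (g : ZMod p) ^ (c + (d : ℤ) * ((a % n : ℕ) : ℤ))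
      = (g : ZMod p) ^ (c + (d : ℤ) * (a : ℤ)) := by
    intro c a
    have hq : (n : ℤ) * ((a / n : ℕ) : ℤ) + ((a % n : ℕ) : ℤ) = (a : ℤ) := by
      exact_mod_cast Nat.div_add_mod a n
    have e : c + (d : ℤ) * (a : ℤ)
        = (c + (d : ℤ) * ((a % n : ℕ) : ℤ)) + ((d * n : ℕ) : ℤ) * ((a / n : ℕ) : ℤ) := by
      rw [hdnz]
      linear_combination (-(d : ℤ)) * hq
    rw [e, key]
  have gen : ∀ (c : ℤ) (u v : ℕ), u < n →
      (g : ZMod p) ^ (((d / 2 : ℕ) : ℤ) + (d : ℤ) * (u : ℤ)) + 1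
        = (g : ZMod p) ^ (c + (d : ℤ) * (v : ℤ)) →
      (g : ZMod p) ^ (((d / 2 : ℕ) : ℤ) + (d : ℤ) * ((n - 1 - u : ℕ) : ℤ)) + 1
        = (g : ZMod p) ^ ((c + ((d / 2 : ℕ) : ℤ))
            + (d : ℤ) * (((v + (n - 1 - u)) % n : ℕ) : ℤ)) := by
    intro c u v hu hyp
    have hm : ((n - 1 - u : ℕ) : ℤ) = (n : ℤ) - 1 - (u : ℤ) := by omega
    have e1 : ((d / 2 : ℕ) : ℤ) + (d : ℤ) * ((n - 1 - u : ℕ) : ℤ)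
        = (-(((d / 2 : ℕ) : ℤ) + (d : ℤ) * (u : ℤ))) + ((d * n : ℕ) : ℤ) * 1 := by
      rw [hm, hdnz]; linear_combination h2D
    rw [e1, key, hcong]
    have e2 : (c + ((d / 2 : ℕ) : ℤ)) + (d : ℤ) * ((v + (n - 1 - u) : ℕ) : ℤ)
        = ((c + (d : ℤ) * (v : ℤ)) + (-(((d / 2 : ℕ) : ℤ) + (d : ℤ) * (u : ℤ))))
          + ((d * n : ℕ) : ℤ) * 1 := by
      have : ((v + (n - 1 - u) : ℕ) : ℤ) = (v : ℤ) + ((n : ℤ) - 1 - (u : ℤ)) := by omega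
      rw [this, hdnz]; linear_combination h2D
    rw [e2, key, zpow_add₀ hg0, ← hyp]
    have hcancel : (g : ZMod p) ^ (((d / 2 : ℕ) : ℤ) + (d : ℤ) * (u : ℤ))
        * (g : ZMod p) ^ (-(((d / 2 : ℕ) : ℤ) + (d : ℤ) * (u : ℤ))) = 1 := by
      rw [← zpow_add₀ hg0, add_neg_cancel, zpow_zero]
    rw [add_mul, hcancel, one_mul, add_comm]
  apply Finset.card_nbij'
    (i := fun uv => (n - 1 - uv.1, (uv.2 + (n - 1 - uv.1)) % n))
    (j := fun uv => (n - 1 - uv.1, ((uv.2 + (n - 1 - uv.1)) % n + 1) % n))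
  · intro uv ha
    obtain ⟨u, v⟩ := uv
    simp only [Finset.mem_coe, Finset.mem_filter, Finset.mem_product, Finset.mem_range] at ha ⊢
    obtain ⟨⟨hu, hv⟩, hcond⟩ := ha
    refine ⟨⟨by omega, Nat.mod_lt _ hn0⟩, ?_⟩
    exact gen k u v hu hcond
  · intro uv ha
    obtain ⟨u, v⟩ := uv
    simp only [Finset.mem_coe, Finset.mem_filter, Finset.mem_product, Finset.mem_range] at ha ⊢
    obtain ⟨⟨hu, hv⟩, hcond⟩ := ha
    refine ⟨⟨by omega, Nat.mod_lt _ hn0⟩, ?_⟩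
    have h := gen (k + ((d / 2 : ℕ) : ℤ)) u v hu hcond
    rw [h]
    set w := (v + (n - 1 - u)) % n with hw
    have e3 : k + (d : ℤ) * ((w + 1 : ℕ) : ℤ)
        = (k + ((d / 2 : ℕ) : ℤ) + ((d / 2 : ℕ) : ℤ)) + (d : ℤ) * (w : ℤ) := by
      have hc1 : ((w + 1 : ℕ) : ℤ) = (w : ℤ) + 1 := by push_cast; ring
      rw [hc1]; linear_combination -h2D
    rw [← e3, ← hcong k (w + 1)]
  · intro uv ha
    obtain ⟨u, v⟩ := uv
    simp only [Finset.mem_coe, Finset.mem_filter, Finset.mem_product, Finset.mem_range] at ha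
    obtain ⟨⟨hu, hv⟩, -⟩ := ha
    have h1' : n - 1 - (n - 1 - u) = u := by omega
    simp only [h1', Prod.mk.injEq, Nat.mod_add_mod]
    refine ⟨trivial, ?_⟩
    have : v + (n - 1 - u) + u + 1 = v + n := by omega
    rw [this, Nat.add_mod_right, Nat.mod_eq_of_lt hv]
  · intro uv ha
    obtain ⟨u, v⟩ := uv
    simp only [Finset.mem_coe, Finset.mem_filter, Finset.mem_product, Finset.mem_range] at ha
    obtain ⟨⟨hu, hv⟩, -⟩ := ha
    have h1' : n - 1 - (n - 1 - u) = u := by omega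
    simp only [h1', Prod.mk.injEq, Nat.mod_add_mod]
    refine ⟨trivial, ?_⟩
    have : v + (n - 1 - u) + 1 + u = v + n := by omega
    rw [this, Nat.add_mod_right, Nat.mod_eq_of_lt hv]
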